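/- Let n be an even natural number. Then I_n = (−1)^{n/2}·(n−1)!!, where (n−1)!! is the double factorial with the convention (−1)!! = 1 (i.e. for n = 0 the value is 1). -/

import Mathlib

open MeasureTheory Real

open Filter Polynomial Topology

/-- Physicists' Hermite polynomials: `H 0 x = 1`, `H 1 x = 2x`,
`H (n+1) x = 2x * H n x - 2n * H (n-1) x`. -/
noncomputable def hermiteP : ℕ → ℝ → ℝ
  | 0, _ => 1
  | 1, x => 2 * x
  | n + 2, x => 2 * x * hermiteP (n + 1) x - 2 * ((n : ℝ) + 1) * hermiteP n x

/-- `I n = √(2/π) ∫ H_n(x) e^{-2x²} dx`. -/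
noncomputable def I (n : ℕ) : ℝ :=
  Real.sqrt (2 / π) * ∫ x : ℝ, hermiteP n x * Real.exp (-2 * x ^ 2)

/-- Polynomial version of `hermiteP`. -/
noncomputable def hPoly : ℕ → Polynomial ℝ
  | 0 => 1
  | 1 => Polynomial.C 2 * Polynomial.X
  | n + 2 => Polynomial.C 2 * Polynomial.X * hPoly (n + 1)
      - Polynomial.C (2 * ((n : ℝ) + 1)) * hPoly n

lemma hermiteP_eval : ∀ (n : ℕ) (x : ℝ), hermiteP n x = (hPoly n).eval x
  | 0, x => by simp [hermiteP, hPoly]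
  | 1, x => by simp [hermiteP, hPoly]
  | n + 2, x => by
    simp [hermiteP, hPoly, hermiteP_eval (n + 1) x, hermiteP_eval n x]
    try ring

lemma integrable_pow_gauss (k : ℕ) :
    Integrable (fun x : ℝ => x ^ k * Real.exp (-2 * x ^ 2)) := by
  have g_int : Integrable (fun x : ℝ =>
      Real.exp (-2 * x ^ 2) + (k.factorial : ℝ) * Real.exp (-1 * x ^ 2)) :=
    (integrable_exp_neg_mul_sq (by norm_num)).add
      ((integrable_exp_neg_mul_sq (by norm_num : (0:ℝ) < 1)).const_mul _)
  refine g_int.mono' ?_ ?_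
  · exact ((continuous_pow k).mul (by continuity)).aestronglyMeasurable
  · filter_upwards with x
    have hexp : (0:ℝ) < Real.exp (-2 * x ^ 2) := Real.exp_pos _
    rw [Real.norm_eq_abs, abs_mul, abs_of_pos hexp, abs_pow]
    rcases le_total (|x|) 1 with h | h
    · have h1 : |x| ^ k ≤ 1 := pow_le_one₀ (abs_nonneg x) h
      nlinarith [Real.exp_pos (-1 * x ^ 2), (k.factorial_pos).le,
        (Nat.one_le_cast (α := ℝ)).2 k.factorial_pos]
    · have h1 : |x| ^ k ≤ (x ^ 2) ^ k := by
        have he : (x ^ 2) ^ k = |x| ^ (2 * k) := by rw [← sq_abs, ← pow_mul]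
        rw [he]
        exact pow_le_pow_right₀ h (by omega)
      have h2 : (x ^ 2) ^ k ≤ (k.factorial : ℝ) * Real.exp (x ^ 2) := by
        have := Real.pow_div_factorial_le_exp (x := x ^ 2) (by positivity) k
        have hf : (0:ℝ) < (k.factorial : ℝ) := by exact_mod_cast k.factorial_pos
        calc (x ^ 2) ^ k = ((x ^ 2) ^ k / k.factorial) * k.factorial := by field_simp
        _ ≤ Real.exp (x ^ 2) * k.factorial := by gcongr
        _ = _ := by ring
      have h3 : Real.exp (x ^ 2) * Real.exp (-2 * x ^ 2) = Real.exp (-1 * x ^ 2) := by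
        rw [← Real.exp_add]; ring_nf
      nlinarith [Real.exp_pos (-1 * x ^ 2)]

lemma integrable_poly_gauss (p : Polynomial ℝ) :
    Integrable (fun x : ℝ => p.eval x * Real.exp (-2 * x ^ 2)) := by
  induction p using Polynomial.induction_on' with
  | monomial n c =>
    simp only [eval_monomial]
    have := (integrable_pow_gauss n).const_mul c
    refine this.congr (ae_of_all _ fun x => ?_)
    ring
  | add p q hp hq =>
    refine (hp.add hq).congr (ae_of_all _ fun x => ?_)
    simp [add_mul]

lemma integrable_fun_gauss (f : ℝ → ℝ) (p : Polynomial ℝ) (h : ∀ x, f x = p.eval x) :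
    Integrable (fun x : ℝ => f x * Real.exp (-2 * x ^ 2)) :=
  (integrable_poly_gauss p).congr (ae_of_all _ fun x => by simp [h x])

lemma tendsto_pg_atTop (p : Polynomial ℝ) :
    Tendsto (fun x : ℝ => p.eval x * Real.exp (-2 * x ^ 2)) atTop (𝓝 0) := by
  have h1 : Tendsto (fun x : ℝ => p.eval x / Real.exp x) atTop (𝓝 0) :=
    p.tendsto_div_exp_atTop
  have h2 : Tendsto (fun x : ℝ => Real.exp (x + -2 * x ^ 2)) atTop (𝓝 0) := by
    apply Real.tendsto_exp_atBot.comp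
    refine tendsto_atBot_mono' atTop ?_ tendsto_neg_atTop_atBot
    filter_upwards [eventually_ge_atTop (1:ℝ)] with x hx
    show x + -2 * x ^ 2 ≤ -x
    nlinarith
  have := h1.mul h2
  rw [zero_mul] at this
  refine this.congr fun x => ?_
  rw [Real.exp_add, div_mul_eq_mul_div]
  field_simp [Real.exp_ne_zero]

lemma tendsto_pg_atBot (p : Polynomial ℝ) :
    Tendsto (fun x : ℝ => p.eval x * Real.exp (-2 * x ^ 2)) atBot (𝓝 0) := by
  have h := (tendsto_pg_atTop (p.comp (-Polynomial.X))).comp tendsto_neg_atBot_atTop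
  refine h.congr fun x => ?_
  simp [Function.comp, Polynomial.eval_comp]

lemma hasDerivAt_hermiteP : ∀ (n : ℕ) (x : ℝ),
    HasDerivAt (hermiteP n) (2 * (n : ℝ) * hermiteP (n - 1) x) x
  | 0, x => by
    have : HasDerivAt (hermiteP 0) 0 x := by
      have := hasDerivAt_const x (1 : ℝ)
      refine this.congr_deriv rfl |>.congr_of_eventuallyEq ?_
      filter_upwards with y; simp [hermiteP]
    simpa using this
  | 1, x => by
    have : HasDerivAt (fun y : ℝ => 2 * y) 2 x := by
      simpa using (hasDerivAt_id x).const_mul (2 : ℝ)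
    have h2 : HasDerivAt (hermiteP 1) 2 x :=
      this.congr_of_eventuallyEq (by filter_upwards with y; simp [hermiteP])
    simpa [hermiteP] using h2
  | (n + 2), x => by
    have heq : hermiteP (n + 2) =
        fun y => 2 * y * hermiteP (n + 1) y - 2 * ((n : ℝ) + 1) * hermiteP n y := by
      funext y; simp [hermiteP]
    rw [heq]
    have h1 := hasDerivAt_hermiteP (n + 1) x
    have h0 := hasDerivAt_hermiteP n x
    simp only [Nat.add_sub_cancel] at h1
    have hx : HasDerivAt (fun y : ℝ => 2 * y) 2 x := by
      simpa using (hasDerivAt_id x).const_mul (2 : ℝ)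
    have hd := (hx.mul h1).sub (h0.const_mul (2 * ((n : ℝ) + 1)))
    refine hd.congr_deriv ?_
    symm
    push_cast [Nat.add_sub_cancel]
    rcases n with _ | m
    · simp [hermiteP]; ring
    · have hrec : hermiteP (m + 2) x =
          2 * x * hermiteP (m + 1) x - 2 * ((m : ℝ) + 1) * hermiteP m x := by
        simp [hermiteP]
      push_cast [Nat.add_sub_cancel]
      rw [hrec]
      ring

lemma integral_deriv_zero (n : ℕ) :
    ∫ x : ℝ, (2 * (n : ℝ) * hermiteP (n - 1) x - 4 * x * hermiteP n x)
      * Real.exp (-2 * x ^ 2) = 0 := by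
  set f : ℝ → ℝ := fun x => hermiteP n x * Real.exp (-2 * x ^ 2) with hf
  set g : ℝ → ℝ := fun x => (2 * (n : ℝ) * hermiteP (n - 1) x - 4 * x * hermiteP n x)
      * Real.exp (-2 * x ^ 2) with hg
  have hderiv : ∀ x, HasDerivAt f (g x) x := by
    intro x
    have h1 := hasDerivAt_hermiteP n x
    have hpoly : HasDerivAt (fun y : ℝ => -2 * y ^ 2) (-4 * x) x := by
      have := (hasDerivAt_pow 2 x).const_mul (-2 : ℝ)
      refine this.congr_deriv ?_
      push_cast; ring
    have h2 := hpoly.exp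
    have := h1.mul h2
    refine this.congr_deriv ?_
    simp only [hg]
    ring
  have hint : Integrable g := by
    refine integrable_fun_gauss _ (Polynomial.C (2 * (n : ℝ)) * hPoly (n - 1)
      - Polynomial.C 4 * Polynomial.X * hPoly n) fun x => ?_
    simp [hermiteP_eval]
    try ring
  have htop : Tendsto f atTop (𝓝 0) :=
    (tendsto_pg_atTop (hPoly n)).congr fun x => by rw [hf]; simp [hermiteP_eval]
  have hbot : Tendsto f atBot (𝓝 0) :=
    (tendsto_pg_atBot (hPoly n)).congr fun x => by rw [hf]; simp [hermiteP_eval]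
  have hIic := integral_Iic_of_hasDerivAt_of_tendsto' (a := 0)
    (fun x _ => hderiv x) hint.integrableOn hbot
  have hIoi := integral_Ioi_of_hasDerivAt_of_tendsto' (a := 0)
    (fun x _ => hderiv x) hint.integrableOn htop
  have hsplit := intervalIntegral.integral_Iic_add_Ioi (b := (0:ℝ)) (f := g) (μ := volume)
    hint.integrableOn hint.integrableOn
  rw [hIic, hIoi] at hsplit
  linarith [hsplit]

noncomputable def J (n : ℕ) : ℝ := ∫ x : ℝ, hermiteP n x * Real.exp (-2 * x ^ 2)

lemma integrable_hg (n : ℕ) :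
    Integrable (fun x : ℝ => hermiteP n x * Real.exp (-2 * x ^ 2)) :=
  integrable_fun_gauss _ (hPoly n) fun x => hermiteP_eval n x

lemma integrable_xhg (n : ℕ) :
    Integrable (fun x : ℝ => (2 * x * hermiteP n x) * Real.exp (-2 * x ^ 2)) := by
  refine integrable_fun_gauss _ (Polynomial.C 2 * Polynomial.X * hPoly n) fun x => ?_
  simp [hermiteP_eval]
  try ring

lemma integral_x_hermite (n : ℕ) :
    ∫ x : ℝ, (2 * x * hermiteP n x) * Real.exp (-2 * x ^ 2) = (n : ℝ) * J (n - 1) := by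
  have h0 := integral_deriv_zero n
  have ha : Integrable (fun x : ℝ => (2 * (n : ℝ) * hermiteP (n - 1) x)
      * Real.exp (-2 * x ^ 2)) := by
    refine integrable_fun_gauss _ (Polynomial.C (2 * (n : ℝ)) * hPoly (n - 1)) fun x => ?_
    simp [hermiteP_eval]
    try ring
  have hb : Integrable (fun x : ℝ => (4 * x * hermiteP n x) * Real.exp (-2 * x ^ 2)) := by
    refine integrable_fun_gauss _ (Polynomial.C 4 * Polynomial.X * hPoly n) fun x => ?_
    simp [hermiteP_eval]
    try ring
  have hsub : (fun x : ℝ => (2 * (n : ℝ) * hermiteP (n - 1) x - 4 * x * hermiteP n x)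
      * Real.exp (-2 * x ^ 2)) = fun x : ℝ =>
        (2 * (n : ℝ) * hermiteP (n - 1) x) * Real.exp (-2 * x ^ 2)
        - (4 * x * hermiteP n x) * Real.exp (-2 * x ^ 2) := by
    funext x; ring
  rw [hsub, integral_sub ha hb] at h0
  have ha' : ∫ x : ℝ, (2 * (n : ℝ) * hermiteP (n - 1) x) * Real.exp (-2 * x ^ 2)
      = 2 * (n : ℝ) * J (n - 1) := by
    rw [J, ← MeasureTheory.integral_const_mul]
    congr 1; funext x; ring
  have hb' : ∫ x : ℝ, (4 * x * hermiteP n x) * Real.exp (-2 * x ^ 2)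
      = 2 * ∫ x : ℝ, (2 * x * hermiteP n x) * Real.exp (-2 * x ^ 2) := by
    rw [← MeasureTheory.integral_const_mul]
    congr 1; funext x; ring
  rw [ha', hb'] at h0
  linarith

lemma J_zero : J 0 = Real.sqrt (π / 2) := by
  have : (fun x : ℝ => hermiteP 0 x * Real.exp (-2 * x ^ 2))
      = fun x : ℝ => Real.exp (-2 * x ^ 2) := by
    funext x; simp [hermiteP]
  rw [J, this, integral_gaussian]

lemma J_rec (n : ℕ) : J (n + 2) = -((n : ℝ) + 1) * J n := by
  have hsplit : (fun x : ℝ => hermiteP (n + 2) x * Real.exp (-2 * x ^ 2))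
      = fun x : ℝ => (2 * x * hermiteP (n + 1) x) * Real.exp (-2 * x ^ 2)
        - (2 * ((n : ℝ) + 1) * hermiteP n x) * Real.exp (-2 * x ^ 2) := by
    funext x
    simp only [hermiteP]
    ring
  have hc : Integrable (fun x : ℝ => (2 * ((n : ℝ) + 1) * hermiteP n x)
      * Real.exp (-2 * x ^ 2)) := by
    refine integrable_fun_gauss _ (Polynomial.C (2 * ((n : ℝ) + 1)) * hPoly n) fun x => ?_
    simp [hermiteP_eval]
    try ring
  have hc' : ∫ x : ℝ, (2 * ((n : ℝ) + 1) * hermiteP n x) * Real.exp (-2 * x ^ 2)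
      = 2 * ((n : ℝ) + 1) * J n := by
    rw [J, ← MeasureTheory.integral_const_mul]
    congr 1; funext x; ring
  rw [show J (n + 2) = ∫ x : ℝ, hermiteP (n + 2) x * Real.exp (-2 * x ^ 2) from rfl,
    hsplit, integral_sub (integrable_xhg (n + 1)) hc, integral_x_hermite (n + 1), hc']
  simp only [Nat.add_sub_cancel]
  push_cast
  ring

lemma doubleFactorial_odd (k : ℕ) :
    Nat.doubleFactorial (2 * k + 1) = (2 * k + 1) * Nat.doubleFactorial (2 * k - 1) := by
  rcases k with _ | m
  · simp [Nat.doubleFactorial]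
  · have h : 2 * (m + 1) + 1 = (2 * m + 1) + 2 := by ring
    rw [h, Nat.doubleFactorial_add_two]
    congr 1
    try omega

theorem I_even_eq (n : ℕ) (hn : Even n) :
    I n = (-1 : ℝ) ^ (n / 2) * (Nat.doubleFactorial (n - 1) : ℝ) := by
  have key : ∀ k : ℕ, I (2 * k) = (-1 : ℝ) ^ k * (Nat.doubleFactorial (2 * k - 1) : ℝ) := by
    intro k
    induction k with
    | zero =>
      simp only [Nat.mul_zero, Nat.zero_sub, Nat.doubleFactorial, pow_zero, Nat.cast_one, mul_one]
      rw [show I 0 = Real.sqrt (2 / π) * J 0 from rfl, J_zero,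
        ← Real.sqrt_mul (by positivity)]
      rw [show (2 / π) * (π / 2) = 1 by field_simp]
      exact Real.sqrt_one
    | succ m ih =>
      have h2 : 2 * (m + 1) = 2 * m + 2 := by ring
      rw [h2]
      have : I (2 * m + 2) = Real.sqrt (2 / π) * J (2 * m + 2) := rfl
      rw [this, J_rec]
      have hI : Real.sqrt (2 / π) * J (2 * m) = I (2 * m) := rfl
      rw [show Real.sqrt (2 / π) * (-((2 * m : ℕ) + 1) * J (2 * m))
          = -((2 * m : ℕ) + 1) * (Real.sqrt (2 / π) * J (2 * m)) by ring, hI, ih]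
      have hdf : (Nat.doubleFactorial (2 * m + 2 - 1) : ℝ)
          = ((2 * m : ℕ) + 1) * (Nat.doubleFactorial (2 * m - 1) : ℝ) := by
        rw [show 2 * m + 2 - 1 = 2 * m + 1 by omega, doubleFactorial_odd]
        push_cast
        ring
      rw [hdf]
      push_cast
      ring
  obtain ⟨k, rfl⟩ := hn
  have h2 : k + k = 2 * k := by ring
  rw [h2, key k, Nat.mul_div_cancel_left k (by norm_num)]
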